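/- Let T be a recursively pointed function tree and S a function tree with [S] ⊆ [T] and S ≤_T T. Then S is also recursively pointed and S ≡_T T. -/

import Mathlib

open scoped ENNReal

attribute [local instance] Classical.propDecidable

/-- Cantor space `2^ω`. -/
abbrev Cantor := ℕ → Bool

/-- The length-`n` initial segment `X↾n` of `X ∈ 2^ω`, as a finite binary string. -/
def seg (X : Cantor) (n : ℕ) : List Bool := (List.range n).map X

/-- `σ ≺ X` : the finite string `σ` is an initial segment of `X`. -/
def PrefixOfSeq (σ : List Bool) (X : Cantor) : Prop := seg X σ.length = σ

/-- The basic clopen set `[σ]` of all infinite sequences extending `σ`. -/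
def cyl (σ : List Bool) : Set Cantor := {X | PrefixOfSeq σ X}

/-- Partial recursive functions relative to a (total) oracle `O : ℕ → ℕ`:
the oracle version of `Nat.Partrec`. -/
inductive RecursiveInFn (O : ℕ → ℕ) : (ℕ →. ℕ) → Prop
  | oracle : RecursiveInFn O (fun n => Part.some (O n))
  | zero : RecursiveInFn O (pure 0)
  | succ : RecursiveInFn O Nat.succ
  | left : RecursiveInFn O ↑fun n : ℕ => n.unpair.1
  | right : RecursiveInFn O ↑fun n : ℕ => n.unpair.2
  | pair {f g} : RecursiveInFn O f → RecursiveInFn O g →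
      RecursiveInFn O fun n => Nat.pair <$> f n <*> g n
  | comp {f g} : RecursiveInFn O f → RecursiveInFn O g →
      RecursiveInFn O fun n => g n >>= f
  | prec {f g} : RecursiveInFn O f → RecursiveInFn O g →
      RecursiveInFn O (Nat.unpaired fun a n =>
        n.rec (f a) fun y IH => do let i ← IH; g (Nat.pair a (Nat.pair y i)))
  | rfind {f} : RecursiveInFn O f →
      RecursiveInFn O fun a => Nat.rfind fun n => (fun m => m = 0) <$> f (Nat.pair a n)

/-- A (total) function between coded types is recursive in the oracle `O`. -/
def RecIn {α β : Type} [Primcodable α] [Primcodable β] (O : ℕ → ℕ) (f : α → β) : Prop :=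
  RecursiveInFn O fun n =>
    (Part.ofOption (Encodable.decode (α := α) n)).bind fun a => Part.some (Encodable.encode (f a))

/-- A set `X ∈ 2^ω` viewed as a total oracle. -/
def oracleOf (X : Cantor) : ℕ → ℕ := fun n => cond (X n) 1 0

/-- A function between coded types viewed as a total oracle on `ℕ`. -/
def oracleFn {α β : Type} [Primcodable α] [Primcodable β] (f : α → β) : ℕ → ℕ :=
  fun n => Encodable.encode ((Encodable.decode (α := α) n).map f)

/-- Turing reducibility `X ≤_T Y` between elements of `2^ω`. -/
def TRed (X Y : Cantor) : Prop := RecIn (oracleOf Y) X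

/-- Turing equivalence `X ≡_T Y`. -/
def TEquiv (X Y : Cantor) : Prop := TRed X Y ∧ TRed Y X

/-- The Turing degree of `Z`, as a set of reals. -/
def degCl (Z : Cantor) : Set Cantor := {Y | TEquiv Y Z}

/-- Many-one reducibility `X ≤_m Y` between subsets of `ω` (as elements of `2^ω`). -/
def ManyOneRed (X Y : Cantor) : Prop := ∃ g : ℕ → ℕ, Computable g ∧ ∀ n, X n = Y (g n)

/-- The recursive join `A ⊕ B`. -/
def join (A B : Cantor) : Cantor := fun n => if n % 2 = 0 then A (n / 2) else B (n / 2)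

/-- `X` is of minimal Turing degree. -/
def MinimalDeg (X : Cantor) : Prop :=
  ¬Computable X ∧ ∀ Y : Cantor, TRed Y X → Computable Y ∨ TRed X Y

/-- `B` is a minimal cover of the countable class `S`: `B` strictly bounds every member of `S`,
and everything below `B` is either below some member of `S` or joins with one above `B`. -/
def MinimalCoverOf (B : Cantor) (S : Set Cantor) : Prop :=
  (∀ A ∈ S, TRed A B ∧ ¬TRed B A) ∧
  ∀ C : Cantor, TRed C B → ∃ A ∈ S, TRed C A ∨ TRed B (join A C)

/-- `R` is of hyperimmune-free degree: every function it computes is dominated by a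
computable function. -/
def HypImmFree (R : Cantor) : Prop :=
  ∀ f : ℕ → ℕ, RecIn (oracleOf R) f → ∃ g : ℕ → ℕ, Computable g ∧ ∀ n, f n ≤ g n

/-- `d` is a supermartingale. -/
def IsSupermartingale (d : List Bool → ℝ) : Prop :=
  (∀ σ, 0 ≤ d σ) ∧ ∀ σ, d (σ ++ [false]) + d (σ ++ [true]) ≤ 2 * d σ

/-- `d` is a martingale. -/
def IsMartingale (d : List Bool → ℝ) : Prop :=
  (∀ σ, 0 ≤ d σ) ∧ ∀ σ, d (σ ++ [false]) + d (σ ++ [true]) = 2 * d σ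

/-- `d` is lower semicomputable (r.e.) relative to oracle `O`: it is the monotone limit of a
uniformly `O`-recursive sequence of rationals. -/
def LowerSemicomputableIn (O : ℕ → ℕ) (d : List Bool → ℝ) : Prop :=
  ∃ q : List Bool × ℕ → ℚ, RecIn O q ∧ (∀ σ, Monotone fun n => q (σ, n)) ∧
    ∀ σ, Filter.Tendsto (fun n => (q (σ, n) : ℝ)) Filter.atTop (nhds (d σ))

/-- `d` is lower semicomputable (an r.e. supermartingale value function). -/
def LowerSemicomputable (d : List Bool → ℝ) : Prop :=
  ∃ q : List Bool × ℕ → ℚ, Computable q ∧ (∀ σ, Monotone fun n => q (σ, n)) ∧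
    ∀ σ, Filter.Tendsto (fun n => (q (σ, n) : ℝ)) Filter.atTop (nhds (d σ))

/-- `d` `s`-succeeds on `X`: `limsup_n d(X↾n)/2^{(1-s)n} = ∞`
(equivalently, the sequence is unbounded). -/
def Succeeds (d : List Bool → ℝ) (s : ℚ) (X : Cantor) : Prop :=
  ∀ C : ℝ, ∃ n : ℕ, C * (2 : ℝ) ^ ((1 - (s : ℝ)) * n) ≤ d (seg X n)

/-- `d` strongly `s`-succeeds on `X`: `liminf_n d(X↾n)/2^{(1-s)n} = ∞`. -/
def SucceedsStrongly (d : List Bool → ℝ) (s : ℚ) (X : Cantor) : Prop :=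
  ∀ C : ℝ, ∃ N : ℕ, ∀ n ≥ N, C * (2 : ℝ) ^ ((1 - (s : ℝ)) * n) ≤ d (seg X n)

/-- Generic dimension notion: the infimum of all `s ∈ ℚ ∩ [0,1]` such that some supermartingale
satisfying `P` succeeds (in the sense of `Succ`) on every member of `A` (with value `1` if there
is no such `s`). -/
noncomputable def dimVia (P : (List Bool → ℝ) → Prop)
    (Succ : (List Bool → ℝ) → ℚ → Cantor → Prop) (A : Set Cantor) : ℝ≥0∞ :=
  sInf ({1} ∪ {x : ℝ≥0∞ | ∃ s : ℚ, 0 ≤ s ∧ s ≤ 1 ∧ x = ENNReal.ofReal (s : ℝ) ∧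
    ∃ d, IsSupermartingale d ∧ P d ∧ ∀ X ∈ A, Succ d s X})

/-- Effective Hausdorff dimension of a class (Lutz). -/
noncomputable def effDim (A : Set Cantor) : ℝ≥0∞ := dimVia LowerSemicomputable Succeeds A

/-- Effective Hausdorff dimension relative to oracle `O`. -/
noncomputable def effDimIn (O : ℕ → ℕ) (A : Set Cantor) : ℝ≥0∞ :=
  dimVia (LowerSemicomputableIn O) Succeeds A

/-- Effective packing dimension of a class. -/
noncomputable def effPDim (A : Set Cantor) : ℝ≥0∞ := dimVia LowerSemicomputable SucceedsStrongly A

/-- Effective packing dimension relative to oracle `O`. -/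
noncomputable def effPDimIn (O : ℕ → ℕ) (A : Set Cantor) : ℝ≥0∞ :=
  dimVia (LowerSemicomputableIn O) SucceedsStrongly A

/-- (Classical) Hausdorff dimension of a subset of `2^ω`, via the point-to-set principle:
the infimum over all oracles `Z` of the effective-in-`Z` Hausdorff dimension. -/
noncomputable def hausdorffDim (A : Set Cantor) : ℝ≥0∞ := ⨅ Z : Cantor, effDimIn (oracleOf Z) A

/-- (Classical) packing dimension of a subset of `2^ω`, via the point-to-set principle. -/
noncomputable def packingDim (A : Set Cantor) : ℝ≥0∞ := ⨅ Z : Cantor, effPDimIn (oracleOf Z) A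

/-- The canonical enumeration `n ↦ D_n` of finite subsets of `ω`: `D_n` is the set of
positions of 1-bits in the binary expansion of `n`. -/
def Dfin (n : ℕ) : Finset ℕ := (Finset.range n).filter fun i => n.testBit i = true

/-- `A` is recursively traceable. -/
def RecTraceable (A : Cantor) : Prop :=
  ∃ b : ℕ → ℕ, Computable b ∧ ∀ f : ℕ → ℕ, RecIn (oracleOf A) f →
    ∃ g : ℕ → ℕ, Computable g ∧ ∀ n, (Dfin (g n)).card ≤ b n ∧ f n ∈ Dfin (g n)

/-- A function tree: `T(σi)` properly extends `T(σ)`, and `T(σ0)`, `T(σ1)` are incomparable. -/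
structure FunTree where
  f : List Bool → List Bool
  extend : ∀ σ (i : Bool), f σ <+: f (σ ++ [i]) ∧ (f σ).length < (f (σ ++ [i])).length
  split : ∀ σ, ¬ f (σ ++ [false]) <+: f (σ ++ [true]) ∧ ¬ f (σ ++ [true]) <+: f (σ ++ [false])

/-- `[T]`, the set of infinite paths through the function tree `T`. -/
def Paths (T : FunTree) : Set Cantor :=
  {X | ∃ Y : Cantor, ∀ n, PrefixOfSeq (T.f (seg Y n)) X}

/-- `T ≤_T Y` for a function tree `T` and a real `Y`. -/
def TreeRedToReal (T : FunTree) (Y : Cantor) : Prop := RecIn (oracleOf Y) T.f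

/-- `Y ≤_T T` for a real `Y` and a function tree `T` (the tree used as an oracle). -/
def RealRedToTree (Y : Cantor) (T : FunTree) : Prop := RecIn (oracleFn T.f) Y

/-- `S ≤_T T` between function trees. -/
def TreeRedToTree (S T : FunTree) : Prop := RecIn (oracleFn T.f) S.f

/-- `T` is recursively pointed: every path of `T` computes `T`. -/
def RecPointed (T : FunTree) : Prop := ∀ X ∈ Paths T, TreeRedToReal T X

/-- The binary value of a string (read most-significant-bit first); strings of equal
length are lexicographically ordered exactly as their values. -/
def natOfStr (σ : List Bool) : ℕ := σ.foldl (fun a b => 2 * a + cond b 1 0) 0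

/-- The length-`len` binary string with value `k`. -/
def strOfNat (len k : ℕ) : List Bool := (List.range len).map fun i => k.testBit (len - 1 - i)

/-- `l(σ) = Σ_{|τ|=|σ|, τ <_L σ} ν([τ])`, computed via the value correspondence between the
lexicographic order on strings of equal length and the numeric order of their values. -/
noncomputable def lfun (ν : MeasureTheory.Measure Cantor) (σ : List Bool) : ℝ :=
  ∑ k ∈ Finset.range (natOfStr σ), (ν (cyl (strOfNat σ.length k))).toReal

/-- `r(σ) = l(σ) + ν([σ])`. -/
noncomputable def rfun (ν : MeasureTheory.Measure Cantor) (σ : List Bool) : ℝ :=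
  lfun ν σ + (ν (cyl σ)).toReal

/-- `0.A`: the real number in `[0,1]` with binary expansion `A`. -/
noncomputable def realOf (A : Cantor) : ℝ := ∑' n : ℕ, cond (A n) ((2 : ℝ)⁻¹ ^ (n + 1)) 0

/-- The weight `2^{-|σ|}` of an (optional) string, for measuring Martin-Löf tests. -/
noncomputable def testWeight : Option (List Bool) → ℝ≥0∞
  | none => 0
  | some σ => (2 : ℝ≥0∞)⁻¹ ^ σ.length

/-- `V` is a Martin-Löf test: a uniformly computable enumeration whose `n`-th level has
total weight at most `2^{-n}`. -/
def MLTest (V : ℕ × ℕ → Option (List Bool)) : Prop :=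
  Computable V ∧ ∀ n, (∑' k : ℕ, testWeight (V (n, k))) ≤ (2 : ℝ≥0∞)⁻¹ ^ n

/-- `X` is covered by the test `V` (belongs to every level). -/
def MLCovered (V : ℕ × ℕ → Option (List Bool)) (X : Cantor) : Prop :=
  ∀ n, ∃ k σ, V (n, k) = some σ ∧ PrefixOfSeq σ X

/-- `X` is 1-random (Martin-Löf random). -/
def MLRandom (X : Cantor) : Prop := ∀ V, MLTest V → ¬MLCovered V X

/-- An antichain of Turing degrees (containing no computable set, closed under Turing
equivalence, with Turing-inequivalent members pairwise incomparable). -/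
def IsAntichainDeg (B : Set Cantor) : Prop :=
  (∀ X ∈ B, ¬Computable X) ∧ (∀ X ∈ B, ∀ Y, TEquiv Y X → Y ∈ B) ∧
  ∀ X ∈ B, ∀ Y ∈ B, ¬TEquiv X Y → ¬TRed X Y ∧ ¬TRed Y X

/-- A maximal antichain of Turing degrees. -/
def MaximalAntichainDeg (B : Set Cantor) : Prop :=
  IsAntichainDeg B ∧ ∀ Z ∉ B, ¬IsAntichainDeg (B ∪ degCl Z)

/-- A chain of Turing degrees. -/
def IsChainDeg (A : Set Cantor) : Prop :=
  (∀ X ∈ A, ∀ Y, TEquiv Y X → Y ∈ A) ∧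
  ∀ X ∈ A, ∀ Y ∈ A, ¬TEquiv X Y → TRed X Y ∨ TRed Y X

/-- A maximal chain of Turing degrees. -/
def MaximalChainDeg (A : Set Cantor) : Prop :=
  IsChainDeg A ∧ ∀ Z ∉ A, ¬IsChainDeg (A ∪ degCl Z)

/-- The first uncountable ordinal `ω₁`. -/
noncomputable def omega1 : Ordinal := (Cardinal.aleph 1).ord


section Stmt8Aux

open Encodable

private lemma recursiveIn_of_eq {O : ℕ → ℕ} {f g : ℕ →. ℕ} (h : RecursiveInFn O f)
    (H : ∀ n, f n = g n) : RecursiveInFn O g := (funext H : f = g) ▸ h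

private lemma recIn_of_partrec {O : ℕ → ℕ} {f : ℕ →. ℕ} (hf : Nat.Partrec f) :
    RecursiveInFn O f := by
  induction hf with
  | zero => exact RecursiveInFn.zero
  | succ => exact RecursiveInFn.succ
  | left => exact RecursiveInFn.left
  | right => exact RecursiveInFn.right
  | pair _ _ ih1 ih2 => exact RecursiveInFn.pair ih1 ih2
  | comp _ _ ih1 ih2 => exact RecursiveInFn.comp ih1 ih2
  | prec _ _ ih1 ih2 => exact RecursiveInFn.prec ih1 ih2
  | rfind _ ih => exact RecursiveInFn.rfind ih

private lemma recursiveIn_trans {O O' : ℕ → ℕ} {f : ℕ →. ℕ} (hf : RecursiveInFn O f)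
    (hO : RecursiveInFn O' (fun n => Part.some (O n))) : RecursiveInFn O' f := by
  induction hf with
  | oracle => exact hO
  | zero => exact RecursiveInFn.zero
  | succ => exact RecursiveInFn.succ
  | left => exact RecursiveInFn.left
  | right => exact RecursiveInFn.right
  | pair _ _ ih1 ih2 => exact RecursiveInFn.pair ih1 ih2
  | comp _ _ ih1 ih2 => exact RecursiveInFn.comp ih1 ih2
  | prec _ _ ih1 ih2 => exact RecursiveInFn.prec ih1 ih2
  | rfind _ ih => exact RecursiveInFn.rfind ih

private lemma recIn_trans {α β : Type} [Primcodable α] [Primcodable β] {O O' : ℕ → ℕ}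
    {f : α → β} (h : RecIn O' f) (hO : RecursiveInFn O (fun n => Part.some (O' n))) :
    RecIn O f :=
  recursiveIn_trans h hO

private lemma recursiveIn_total {O : ℕ → ℕ} {f : ℕ → ℕ} (hf : Computable f) :
    RecursiveInFn O (fun n => Part.some (f n)) :=
  recIn_of_partrec (Partrec.nat_iff.mp hf)

/-- From `X ≤_T O` get that the oracle `oracleOf X` is recursive in `O`. -/
private lemma cantor_oracle_recursiveIn {O : ℕ → ℕ} {X : Cantor} (h : RecIn O X) :
    RecursiveInFn O (fun n => Part.some (oracleOf X n)) := by
  have e : (fun n => (Part.ofOption (Encodable.decode (α := ℕ) n)).bind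
      fun a => Part.some (Encodable.encode (X a))) = fun n => Part.some (oracleOf X n) := by
    funext n
    have : Encodable.encode (X n) = oracleOf X n := by
      cases hx : X n <;> simp [oracleOf, hx]
    simp [Part.ofOption, this]
  exact e ▸ h

/-- From `g ≤_T O` (as a function on strings) get that the oracle `oracleFn g`
is recursive in `O`. -/
private lemma oracleFn_recursiveIn {O : ℕ → ℕ} {g : List Bool → List Bool} (hg : RecIn O g) :
    RecursiveInFn O (fun n => Part.some (oracleFn g n)) := by
  classical
  set p : ℕ →. ℕ := fun n => (Part.ofOption (Encodable.decode (α := List Bool) n)).bind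
      fun a => Part.some (Encodable.encode (g a)) with hp
  have hpR : RecursiveInFn O p := hg
  set c : ℕ → ℕ := fun n => Encodable.encode (Encodable.decode (α := List Bool) n) with hc
  have hcR : RecursiveInFn O (fun n => Part.some (c n)) :=
    recIn_of_partrec (Nat.Partrec.of_primrec (Primcodable.prim (α := List Bool)))
  have hidR : RecursiveInFn O (fun n : ℕ => Part.some n) :=
    recursiveIn_total Computable.id
  set q : ℕ →. ℕ :=
    fun m => ((↑(fun k : ℕ => (Nat.unpair k).1) : ℕ →. ℕ) m >>= p) >>= (↑Nat.succ : ℕ →. ℕ)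
    with hq
  have g0R : RecursiveInFn O q :=
    RecursiveInFn.comp RecursiveInFn.succ (RecursiveInFn.comp hpR RecursiveInFn.left)
  have F0R := RecursiveInFn.prec RecursiveInFn.zero g0R
  have FR := RecursiveInFn.comp F0R (RecursiveInFn.pair hidR hcR)
  refine recursiveIn_of_eq FR fun n => ?_
  have hseq : (Nat.pair <$> Part.some n <*> Part.some (c n)) = Part.some (Nat.pair n (c n)) := by
    simp [Seq.seq]
  rw [hseq, Part.bind_eq_bind, Part.bind_some, Nat.unpaired, Nat.unpair_pair]
  cases hd : Encodable.decode (α := List Bool) n with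
  | none =>
      have h0 : c n = 0 := by simp [hc, hd]
      have h1 : oracleFn g n = 0 := by simp [oracleFn, hd]
      rw [h0, h1]
      rfl
  | some a =>
      have hcn : c n = Encodable.encode a + 1 := by simp [hc, hd]
      have hpn : p n = Part.some (Encodable.encode (g a)) := by
        simp [hp, hd, Part.ofOption]
      have step : ∀ y i : ℕ, q (Nat.pair n (Nat.pair y i)) =
          Part.some (Encodable.encode (g a) + 1) := by
        intro y i
        rw [hq]
        simp only [PFun.lift, Part.bind_eq_bind, Part.coe_some, Part.bind_some,
          Nat.unpair_pair, hpn]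
        change ((Part.some n).bind p).bind (fun k => Part.some (Nat.succ k)) = _
        rw [Part.bind_some]
        exact (congrArg (fun x => x.bind fun k => Part.some (Nat.succ k)) hpn).trans
          (Part.bind_some _ _)
      have hval : oracleFn g n = Encodable.encode (g a) + 1 := by
        simp [oracleFn, hd]
      have hdom : ∀ k : ℕ, ∃ v : ℕ,
          (Nat.rec ((pure 0 : ℕ →. ℕ) n)
            (fun y IH => IH >>= fun i => q (Nat.pair n (Nat.pair y i))) k : Part ℕ) =
            Part.some v := by
        intro k
        induction k with
        | zero => exact ⟨0, rfl⟩
        | succ y ih =>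
            obtain ⟨v, hv⟩ := ih
            refine ⟨Encodable.encode (g a) + 1, ?_⟩
            show (Nat.rec _ _ y : Part ℕ) >>= _ = _
            rw [hv, Part.bind_eq_bind, Part.bind_some]
            exact step y v
      rw [hval, hcn]
      obtain ⟨v, hv⟩ := hdom (Encodable.encode a)
      show (Nat.rec ((pure 0 : ℕ →. ℕ) n)
          (fun y IH => IH >>= fun i => q (Nat.pair n (Nat.pair y i)))
          (Encodable.encode a) : Part ℕ) >>=
          (fun i => q (Nat.pair n (Nat.pair (Encodable.encode a) i))) = _
      rw [hv, Part.bind_eq_bind, Part.bind_some]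
      exact step _ v

/-- The string `S.f (0^m)` along the leftmost branch. -/
private def tauS (S : FunTree) (m : ℕ) : List Bool := S.f (List.replicate m false)

/-- The leftmost path of `S`. -/
private def lmPath (S : FunTree) : Cantor := fun n => (tauS S (n + 1)).getD n false

private lemma tauS_prefix (S : FunTree) {a b : ℕ} (h : a ≤ b) : tauS S a <+: tauS S b := by
  induction b with
  | zero => simp_all
  | succ b ih =>
      rcases Nat.lt_or_ge a (b + 1) with h' | h'
      · exact (ih (Nat.lt_succ_iff.mp h')).trans
          (by simpa [tauS, List.replicate_succ'] using (S.extend (List.replicate b false) false).1)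
      · have : a = b + 1 := le_antisymm h h'
        simp [this]

private lemma tauS_len (S : FunTree) (m : ℕ) : m ≤ (tauS S m).length := by
  induction m with
  | zero => exact Nat.zero_le _
  | succ m ih =>
      have := (S.extend (List.replicate m false) false).2
      have h2 : (tauS S m).length < (tauS S (m + 1)).length := by
        simpa [tauS, List.replicate_succ'] using this
      omega

private lemma lmPath_bit (S : FunTree) {m i : ℕ} (h : i < (tauS S m).length) :
    lmPath S i = (tauS S m).getD i false := by
  rcases Nat.le_total (i + 1) m with h' | h'
  · have hpre := tauS_prefix S h'
    have hi : i < (tauS S (i + 1)).length := lt_of_lt_of_le (Nat.lt_succ_self i) (tauS_len S (i + 1))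
    rw [lmPath, List.getD_eq_getElem _ _ hi, List.getD_eq_getElem _ _ h]
    exact hpre.getElem hi
  · have hpre := tauS_prefix S h'
    have hi : i < (tauS S (i + 1)).length :=
      lt_of_lt_of_le h hpre.length_le |>.trans_le (le_refl _)
    rw [lmPath, List.getD_eq_getElem _ _ hi, List.getD_eq_getElem _ _ h]
    exact (hpre.getElem h).symm

private lemma lmPath_mem (S : FunTree) : lmPath S ∈ Paths S := by
  refine ⟨fun _ => false, fun m => ?_⟩
  have hseg : seg (fun _ => false) m = List.replicate m false := by
    simp [seg, List.map_const']
  rw [hseg]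
  show seg (lmPath S) (tauS S m).length = tauS S m
  apply List.ext_getElem
  · simp [seg]
  · intro i h1 h2
    have hi : i < (tauS S m).length := h2
    have : seg (lmPath S) (tauS S m).length = (List.range (tauS S m).length).map (lmPath S) := rfl
    simp only [seg, List.getElem_map, List.getElem_range]
    rw [lmPath_bit S hi, List.getD_eq_getElem _ _ hi]

/-- The leftmost path of `S` is computable from (the oracle of) `S`. -/
private lemma lmPath_recIn (S : FunTree) : RecIn (oracleFn S.f) (lmPath S) := by
  classical
  set O := oracleFn S.f with hO
  -- u n = code of the string 0^{n+1}
  set u : ℕ → ℕ := fun n => Encodable.encode (List.replicate (n + 1) false) with hu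
  have hurepl : Computable (fun n : ℕ => List.replicate (n + 1) false) := by
    have h1 : Primrec (fun n : ℕ => (List.range (n + 1)).map fun _ => false) :=
      Primrec.list_map (Primrec.list_range.comp Primrec.succ)
        ((Primrec.const false).comp Primrec.snd).to₂
    have : (fun n : ℕ => (List.range (n + 1)).map fun _ => false) =
        fun n : ℕ => List.replicate (n + 1) false := by
      funext n; simp [List.map_const']
    exact Primrec.to_comp (this ▸ h1)
  have huC : Computable u := Computable.encode.comp hurepl
  -- w decodes the oracle answer and extracts the bit
  set w : ℕ → ℕ := fun m => Encodable.encode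
      (((Encodable.decode (α := List Bool) (m.unpair.2 - 1)).getD []).getD m.unpair.1 false)
    with hw
  have hwC : Computable w := by
    have h1 : Computable (fun m : ℕ => Encodable.decode (α := List Bool) (m.unpair.2 - 1)) :=
      Computable.decode.comp
        ((Primrec.pred.comp (Primrec.snd.comp Primrec.unpair)).to_comp)
    have h2 : Computable (fun m : ℕ =>
        (Encodable.decode (α := List Bool) (m.unpair.2 - 1)).getD []) :=
      Primrec.option_getD.to_comp.comp h1 (Computable.const [])
    have h3 : Computable (fun m : ℕ =>
        ((Encodable.decode (α := List Bool) (m.unpair.2 - 1)).getD []).getD m.unpair.1 false) :=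
      (Primrec.list_getD false).to_comp.comp h2
        ((Primrec.fst.comp Primrec.unpair).to_comp)
    exact Computable.encode.comp h3
  have huR : RecursiveInFn O (fun n => Part.some (u n)) := recursiveIn_total huC
  have hwR : RecursiveInFn O (fun n => Part.some (w n)) := recursiveIn_total hwC
  have hidR : RecursiveInFn O (fun n : ℕ => Part.some n) := recursiveIn_total Computable.id
  have houR := RecursiveInFn.comp (RecursiveInFn.oracle (O := O)) huR
  have FR := RecursiveInFn.comp hwR (RecursiveInFn.pair hidR houR)
  have key : ∀ n, w (Nat.pair n (O (u n))) = Encodable.encode (lmPath S n) := by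
    intro n
    have h1 : O (u n) = Encodable.encode (S.f (List.replicate (n + 1) false)) + 1 := by
      simp [hO, hu, oracleFn, Encodable.encodek]
    have h2 : w (Nat.pair n (O (u n))) =
        Encodable.encode ((S.f (List.replicate (n + 1) false)).getD n false) := by
      simp [hw, h1, Nat.unpair_pair, Encodable.encodek]
    rw [h2]
    rfl
  show RecursiveInFn O _
  refine recursiveIn_of_eq FR fun n => ?_
  have hou : (Part.some (u n) >>= fun m => Part.some (O m)) = Part.some (O (u n)) :=
    Part.bind_some _ _
  have hseq : (Nat.pair <$> Part.some n <*> Part.some (O (u n))) =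
      Part.some (Nat.pair n (O (u n))) := by simp [Seq.seq]
  show (Nat.pair <$> Part.some n <*> (Part.some (u n) >>= fun m => Part.some (O m)))
      >>= (fun m => Part.some (w m)) = _
  rw [hou, hseq]
  simp only [Part.bind_eq_bind, Part.bind_some]
  rw [key n]
  simp [Part.ofOption]

end Stmt8Aux

/-- if `T` is recursively pointed, `S` is a function tree with `[S] ⊆ [T]` and
`S ≤_T T`, then `S` is recursively pointed and `S ≡_T T`. -/
theorem stmt8 (T S : FunTree) (hT : RecPointed T) (hsub : Paths S ⊆ Paths T)
    (hST : TreeRedToTree S T) :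
    RecPointed S ∧ TreeRedToTree S T ∧ TreeRedToTree T S := by
  have hTS : TreeRedToTree T S := by
    have hXS := lmPath_mem S
    have hXred := lmPath_recIn S
    have hTX : RecIn (oracleOf (lmPath S)) T.f := hT _ (hsub hXS)
    exact recIn_trans hTX (cantor_oracle_recursiveIn hXred)
  refine ⟨?_, hST, hTS⟩
  intro X hX
  have hTX : RecIn (oracleOf X) T.f := hT X (hsub hX)
  exact recIn_trans hST (oracleFn_recursiveIn hTX)
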